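/- Let g : ℝ → ℝ be continuous with lim_{x→±∞} g(x) = 0, and suppose G(x) = g(x) + (1/2)(μ−ν) ln(x²+1) is even and satisfies 0 ≤ G(x) − G(y) ≤ (μ−ν)(ln(x/y) + 2) for all 0 < y ≤ x. Then for every x ≠ 0, (1/x)·h⁻¹(x) ≤ (1/ν) |x|^(ν−1) (x²+1)^((μ−ν)/2) e^(g(x)) and (1/x)·h⁻¹(x) ≥ e^(1−ν−6(μ−ν)) |x|^(ν−1) (x²+1)^((μ−ν)/2) e^(g(x)). -/

import Mathlib

open MeasureTheory Real Filter Set Bornology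

/-- `h⁻¹(x) = ∫₀ˣ |y|^(ν−1)(y²+1)^((μ−ν)/2) e^(g(y)) dy`. -/
noncomputable def hInv (μ ν : ℝ) (g : ℝ → ℝ) (x : ℝ) : ℝ :=
  ∫ y in (0:ℝ)..x, |y| ^ (ν - 1) * (y ^ 2 + 1) ^ ((μ - ν) / 2) * Real.exp (g y)

/-- `(h⁻¹)'(x) = |x|^(ν−1)(x²+1)^((μ−ν)/2) e^(g(x))`. -/
noncomputable def hInvDeriv (μ ν : ℝ) (g : ℝ → ℝ) (x : ℝ) : ℝ :=
  |x| ^ (ν - 1) * (x ^ 2 + 1) ^ ((μ - ν) / 2) * Real.exp (g x)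

/-- The constant `κ = κ(g)` determined by `∫_ℝ κ/(x h⁻¹(x) (h⁻¹)'(x)) dx = (μ−ν)π`. -/
noncomputable def kappa (μ ν : ℝ) (g : ℝ → ℝ) : ℝ :=
  (μ - ν) * Real.pi / ∫ x : ℝ, 1 / (x * hInv μ ν g x * hInvDeriv μ ν g x)

/-- `F'(x) = κ/(x h⁻¹(x) (h⁻¹)'(x))`. -/
noncomputable def Fder (μ ν : ℝ) (g : ℝ → ℝ) (x : ℝ) : ℝ :=
  kappa μ ν g / (x * hInv μ ν g x * hInvDeriv μ ν g x)

/-- `F = F_g`, the antiderivative of `Fder` with `F(+∞) = 0`. -/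
noncomputable def Fg (μ ν : ℝ) (g : ℝ → ℝ) (x : ℝ) : ℝ :=
  -∫ y in Set.Ioi x, Fder μ ν g y

/-- `θ(x)`: the continuous branch of `arg (x − i)`, i.e. `arctan(−1/x)` for `x > 0`,
`arctan(−1/x) − π` for `x < 0`, and `−π/2` at `x = 0`. -/
noncomputable def theta (x : ℝ) : ℝ :=
  if x = 0 then -(Real.pi / 2)
  else if x < 0 then Real.arctan (-1 / x) - Real.pi
  else Real.arctan (-1 / x)

/-- `HasHilbertAt f x v`: the principal value `(1/π) lim_{ε→0⁺} ∫_{|x−y|>ε} f(y)/(x−y) dy`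
exists and equals `v`. -/
def HasHilbertAt (f : ℝ → ℝ) (x v : ℝ) : Prop :=
  Filter.Tendsto
    (fun ε : ℝ => (1 / Real.pi) * ∫ y in {y : ℝ | ε < |x - y|}, f y / (x - y))
    (nhdsWithin 0 (Set.Ioi 0)) (nhds v)

/-- `G(x) = g(x) + (1/2)(μ−ν) ln(x²+1)`. -/
noncomputable def Gfun (μ ν : ℝ) (g : ℝ → ℝ) (x : ℝ) : ℝ :=
  g x + (1 / 2) * (μ - ν) * Real.log (x ^ 2 + 1)

/-- `g` is a solution of system (3.12): `g` is bounded and continuous, the principal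
value `T[g](x) = H(F_g − (μ−ν)θ)(x)` exists for every `x`, and `g = T[g]`. -/
def IsSolution (μ ν : ℝ) (g : ℝ → ℝ) : Prop :=
  Continuous g ∧ (∃ M : ℝ, ∀ x, |g x| ≤ M) ∧
    ∀ x : ℝ, HasHilbertAt (fun y => Fg μ ν g y - (μ - ν) * theta y) x (g x)

lemma exp_Gfun_eq (μ ν : ℝ) (g : ℝ → ℝ) (y : ℝ) :
    (y ^ 2 + 1) ^ ((μ - ν) / 2) * Real.exp (g y) = Real.exp (Gfun μ ν g y) := by
  rw [Gfun, Real.rpow_def_of_pos (by positivity), ← Real.exp_add]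
  congr 1
  ring

lemma core_bounds (μ ν : ℝ) (hμ1 : 1 / 2 < μ) (hμ2 : μ ≤ 2) (hν1 : 0 < ν) (hν2 : ν < 1 / 2)
    (g : ℝ → ℝ) (hg : Continuous g)
    (hineq : ∀ x y : ℝ, 0 < y → y ≤ x →
      0 ≤ Gfun μ ν g x - Gfun μ ν g y ∧
      Gfun μ ν g x - Gfun μ ν g y ≤ (μ - ν) * (Real.log (x / y) + 2))
    (x : ℝ) (hx : 0 < x) :
    1 / x * hInv μ ν g x ≤
        1 / ν * |x| ^ (ν - 1) * (x ^ 2 + 1) ^ ((μ - ν) / 2) * Real.exp (g x) ∧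
    Real.exp (1 - ν - 6 * (μ - ν)) * |x| ^ (ν - 1) * (x ^ 2 + 1) ^ ((μ - ν) / 2) *
        Real.exp (g x) ≤ 1 / x * hInv μ ν g x := by
  have hμν : 0 < μ - ν := by linarith
  set F : ℝ → ℝ := fun y => y ^ (ν - 1) * Real.exp (Gfun μ ν g y) with hF
  have hGcont : Continuous fun y : ℝ => Real.exp (Gfun μ ν g y) := by
    apply Real.continuous_exp.comp
    exact hg.add (continuous_const.mul (Continuous.log (by continuity) (fun y => by positivity)))
  have hInv_eq : hInv μ ν g x = ∫ y in (0:ℝ)..x, F y := by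
    rw [hInv]
    apply intervalIntegral.integral_congr
    intro y hy
    rw [uIcc_of_le hx.le] at hy
    show |y| ^ (ν - 1) * (y ^ 2 + 1) ^ ((μ - ν) / 2) * Real.exp (g y) = F y
    simp only [hF]
    rw [abs_of_nonneg hy.1, mul_assoc, exp_Gfun_eq]
  have hFmeas : MeasureTheory.AEStronglyMeasurable F (volume.restrict (Ioc 0 x)) := by
    apply ContinuousOn.aestronglyMeasurable _ measurableSet_Ioc
    apply ContinuousOn.mul _ hGcont.continuousOn
    exact ContinuousOn.rpow_const continuousOn_id (fun y hy => Or.inl (ne_of_gt hy.1))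
  have hFint : IntervalIntegrable F volume 0 x := by
    rw [intervalIntegrable_iff_integrableOn_Ioc_of_le hx.le]
    have hmaj : MeasureTheory.IntegrableOn
        (fun y => y ^ (ν - 1) * Real.exp (Gfun μ ν g x)) (Ioc 0 x) := by
      apply MeasureTheory.Integrable.mul_const
      exact ((intervalIntegral.intervalIntegrable_rpow' (by linarith) (a := 0) (b := x))).1
    refine hmaj.mono' hFmeas ?_
    filter_upwards [MeasureTheory.ae_restrict_mem measurableSet_Ioc] with y hy
    have hGle : Gfun μ ν g y ≤ Gfun μ ν g x := by
      have := (hineq x y hy.1 hy.2).1; linarith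
    have h0 : (0:ℝ) ≤ F y := by
      apply mul_nonneg (Real.rpow_nonneg hy.1.le _) (Real.exp_pos _).le
    rw [Real.norm_of_nonneg h0]
    exact mul_le_mul_of_nonneg_left (Real.exp_le_exp.2 hGle)
      (Real.rpow_nonneg hy.1.le _)
  have hνne : ν - 1 ≠ 0 := by intro h; nlinarith [h]
  -- upper bound
  have hupper_int : IntervalIntegrable (fun y => y ^ (ν - 1) * Real.exp (Gfun μ ν g x))
      volume 0 x := (intervalIntegral.intervalIntegrable_rpow' (by linarith)).mul_const _
  have hmono : (∫ y in (0:ℝ)..x, F y) ≤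
      ∫ y in (0:ℝ)..x, y ^ (ν - 1) * Real.exp (Gfun μ ν g x) := by
    apply intervalIntegral.integral_mono_on hx.le hFint hupper_int
    intro y hy
    rcases eq_or_lt_of_le hy.1 with h0 | h0
    · simp [hF, ← h0, Real.zero_rpow hνne]
    · have hGle : Gfun μ ν g y ≤ Gfun μ ν g x := by
        have := (hineq x y h0 hy.2).1; linarith
      exact mul_le_mul_of_nonneg_left (Real.exp_le_exp.2 hGle) (Real.rpow_nonneg h0.le _)
  have hrint : (∫ y in (0:ℝ)..x, y ^ (ν - 1)) = x ^ ν / ν := by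
    rw [integral_rpow (Or.inl (by linarith))]
    rw [show ν - 1 + 1 = ν by ring, Real.zero_rpow hν1.ne']
    ring
  have hval : (∫ y in (0:ℝ)..x, y ^ (ν - 1) * Real.exp (Gfun μ ν g x))
      = x ^ ν / ν * Real.exp (Gfun μ ν g x) := by
    rw [intervalIntegral.integral_mul_const, hrint]
  have hxν : x ^ (ν - 1) = x ^ ν / x := by
    rw [Real.rpow_sub hx, Real.rpow_one]
  constructor
  · rw [hInv_eq, mul_assoc (1 / ν * |x| ^ (ν - 1)), exp_Gfun_eq, abs_of_pos hx, hxν]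
    calc 1 / x * ∫ y in (0:ℝ)..x, F y
        ≤ 1 / x * (x ^ ν / ν * Real.exp (Gfun μ ν g x)) := by
          apply mul_le_mul_of_nonneg_left _ (by positivity)
          rw [← hval]; exact hmono
      _ = 1 / ν * (x ^ ν / x) * Real.exp (Gfun μ ν g x) := by
          field_simp
  · -- lower bound
    set C : ℝ := Real.exp (Gfun μ ν g x - 2 * (μ - ν)) * x ^ (ν - μ) with hC
    have hlow_int : IntervalIntegrable (fun y => C * y ^ (μ - 1)) volume 0 x :=
      (intervalIntegral.intervalIntegrable_rpow' (by linarith)).const_mul _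
    have hmono2 : (∫ y in (0:ℝ)..x, C * y ^ (μ - 1)) ≤ ∫ y in (0:ℝ)..x, F y := by
      apply intervalIntegral.integral_mono_ae_restrict hx.le hlow_int hFint
      have hne0 : ∀ᵐ y : ℝ, y ≠ (0:ℝ) := by
        rw [MeasureTheory.ae_iff]
        simpa only [ne_eq, not_not, Set.setOf_eq_eq_singleton] using
          (MeasureTheory.measure_singleton (0:ℝ))
      filter_upwards [MeasureTheory.ae_restrict_mem measurableSet_Icc,
        MeasureTheory.ae_restrict_of_ae hne0] with y hy hy0
      have hy1 : 0 < y := lt_of_le_of_ne hy.1 (Ne.symm hy0)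
      have hxy : 0 < x / y := div_pos hx hy1
      have key := (hineq x y hy1 hy.2).2
      rw [mul_add] at key
      have hGy : Gfun μ ν g x - 2 * (μ - ν) + (ν - μ) * Real.log (x / y)
          ≤ Gfun μ ν g y := by nlinarith [key]
      have e1 : Real.exp (Gfun μ ν g x - 2 * (μ - ν)) * (x / y) ^ (ν - μ)
          ≤ Real.exp (Gfun μ ν g y) := by
        rw [Real.rpow_def_of_pos hxy, ← Real.exp_add, mul_comm (Real.log (x / y)) (ν - μ)]
        exact Real.exp_le_exp.2 hGy
      have e2 : (x / y) ^ (ν - μ) = x ^ (ν - μ) * y ^ (μ - ν) := by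
        rw [Real.div_rpow hx.le hy1.le, div_eq_mul_inv, ← Real.rpow_neg hy1.le, neg_sub]
      have hy3 : y ^ (ν - 1) * y ^ (μ - ν) = y ^ (μ - 1) := by
        rw [← Real.rpow_add hy1, show ν - 1 + (μ - ν) = μ - 1 by ring]
      calc C * y ^ (μ - 1)
          = Real.exp (Gfun μ ν g x - 2 * (μ - ν)) * (x / y) ^ (ν - μ) * y ^ (ν - 1) := by
            rw [hC, ← hy3, e2]; ring
        _ ≤ Real.exp (Gfun μ ν g y) * y ^ (ν - 1) :=
            mul_le_mul_of_nonneg_right e1 (Real.rpow_nonneg hy1.le _)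
        _ = F y := by rw [hF]; ring
    have hrint2 : (∫ y in (0:ℝ)..x, y ^ (μ - 1)) = x ^ μ / μ := by
      rw [integral_rpow (Or.inl (by linarith))]
      rw [show μ - 1 + 1 = μ by ring, Real.zero_rpow (by linarith : μ ≠ 0)]
      ring
    have hval2 : (∫ y in (0:ℝ)..x, C * y ^ (μ - 1)) = C * (x ^ μ / μ) := by
      rw [intervalIntegral.integral_const_mul, hrint2]
    -- numeric inequality
    have hμ0 : (0:ℝ) < μ := by linarith
    have hexpμ : μ ≤ Real.exp (4 * μ - 3 * ν - 1) := by
      calc μ = Real.exp (Real.log μ) := (Real.exp_log hμ0).symm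
        _ ≤ _ := Real.exp_le_exp.2 (by
            have := Real.log_le_sub_one_of_pos hμ0; linarith)
    have hnum : Real.exp (1 - ν - 6 * (μ - ν)) * μ ≤ Real.exp (-(2 * (μ - ν))) := by
      calc Real.exp (1 - ν - 6 * (μ - ν)) * μ
          ≤ Real.exp (1 - ν - 6 * (μ - ν)) * Real.exp (4 * μ - 3 * ν - 1) :=
            mul_le_mul_of_nonneg_left hexpμ (Real.exp_pos _).le
        _ = Real.exp (-(2 * (μ - ν))) := by
            rw [← Real.exp_add]; congr 1; ring
    have hA : 1 / x * (C * (x ^ μ / μ))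
        = Real.exp (-(2 * (μ - ν))) * Real.exp (Gfun μ ν g x) * x ^ (ν - 1) / μ := by
      have h1 : x ^ (ν - μ) * x ^ μ = x ^ (ν - 1) * x := by
        rw [← Real.rpow_add hx, show ν - μ + μ = ν by ring, hxν]
        field_simp
      rw [hC, show Gfun μ ν g x - 2 * (μ - ν) = -(2 * (μ - ν)) + Gfun μ ν g x by ring,
        Real.exp_add]
      field_simp
      linear_combination h1
    rw [hInv_eq, mul_assoc (Real.exp (1 - ν - 6 * (μ - ν)) * |x| ^ (ν - 1)),
      exp_Gfun_eq, abs_of_pos hx]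
    calc Real.exp (1 - ν - 6 * (μ - ν)) * x ^ (ν - 1) * Real.exp (Gfun μ ν g x)
        ≤ 1 / x * (C * (x ^ μ / μ)) := by
          rw [hA]
          have hxp : (0:ℝ) < x ^ (ν - 1) := Real.rpow_pos_of_pos hx _
          have hE : (0:ℝ) < Real.exp (Gfun μ ν g x) := Real.exp_pos _
          rw [le_div_iff₀ hμ0]
          nlinarith [mul_le_mul_of_nonneg_right hnum (mul_pos hxp hE).le]
      _ ≤ 1 / x * ∫ y in (0:ℝ)..x, F y := by
          apply mul_le_mul_of_nonneg_left _ (by positivity)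
          rw [← hval2]; exact hmono2

/-- Lemma 5.2, part 2: for `g ∈ X₁`, two-sided bounds for `h⁻¹(x)/x`. -/
theorem statement5 (μ ν : ℝ) (hμ1 : 1 / 2 < μ) (hμ2 : μ ≤ 2) (hν1 : 0 < ν) (hν2 : ν < 1 / 2)
    (g : ℝ → ℝ) (hg : Continuous g)
    (htop : Filter.Tendsto g Filter.atTop (nhds 0))
    (hbot : Filter.Tendsto g Filter.atBot (nhds 0))
    (heven : ∀ x : ℝ, Gfun μ ν g (-x) = Gfun μ ν g x)
    (hineq : ∀ x y : ℝ, 0 < y → y ≤ x →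
      0 ≤ Gfun μ ν g x - Gfun μ ν g y ∧
      Gfun μ ν g x - Gfun μ ν g y ≤ (μ - ν) * (Real.log (x / y) + 2)) :
    ∀ x : ℝ, x ≠ 0 →
      1 / x * hInv μ ν g x ≤
          1 / ν * |x| ^ (ν - 1) * (x ^ 2 + 1) ^ ((μ - ν) / 2) * Real.exp (g x) ∧
      Real.exp (1 - ν - 6 * (μ - ν)) * |x| ^ (ν - 1) * (x ^ 2 + 1) ^ ((μ - ν) / 2) *
          Real.exp (g x) ≤ 1 / x * hInv μ ν g x := by
  have hgeven : ∀ x : ℝ, g (-x) = g x := by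
    intro x
    have h := heven x
    rw [Gfun, Gfun, neg_sq] at h
    linarith
  have hodd : ∀ x : ℝ, hInv μ ν g (-x) = -hInv μ ν g x := by
    intro x
    have hev : ∀ y : ℝ, |(-y)| ^ (ν - 1) * ((-y) ^ 2 + 1) ^ ((μ - ν) / 2) * Real.exp (g (-y))
        = |y| ^ (ν - 1) * (y ^ 2 + 1) ^ ((μ - ν) / 2) * Real.exp (g y) := by
      intro y; rw [abs_neg, neg_sq, hgeven]
    rw [hInv, hInv]
    rw [show (0:ℝ) = -(0:ℝ) by ring]
    rw [← intervalIntegral.integral_comp_neg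
      (fun y => |y| ^ (ν - 1) * (y ^ 2 + 1) ^ ((μ - ν) / 2) * Real.exp (g y))]
    simp only [hev]
    rw [show -(0:ℝ) = (0:ℝ) by ring, intervalIntegral.integral_symm]
  intro x hx
  rcases lt_or_gt_of_ne hx with hneg | hpos
  · have ht : 0 < -x := by linarith
    have h := core_bounds μ ν hμ1 hμ2 hν1 hν2 g hg hineq (-x) ht
    have h1 : 1 / x * hInv μ ν g x = 1 / (-x) * hInv μ ν g (-x) := by
      rw [hodd]
      field_simp
    have h2 : g x = g (-x) := (hgeven x).symm
    rw [h1, ← abs_neg, ← neg_sq x, h2]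
    exact h
  · exact core_bounds μ ν hμ1 hμ2 hν1 hν2 g hg hineq x hpos
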